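/- Fix i ∈ {1,…,N} with T₂(i) nonempty, and let δ_T ∈ [0, r²]. Let σ = P_{(j,l)∈T₂(i)×T₂(i)}[z_jᵀz_l ≤ δ_T]. Then E_{(j,l)∈T₂(i)×T₂(i)}[z_jᵀz_l] ≥ δ_T − √(5 σ (r² + δ_T) r²). -/

import Mathlib

open Finset
open scoped BigOperators RealInnerProductSpace

/-- The set of indices whose label is `k`. -/
def classSet {N K : ℕ} (y : Fin N → Fin K) (k : Fin K) : Finset (Fin N) :=
  Finset.univ.filter (fun j => y j = k)

/-- `T₂(i)`: the indices `j` with `ŵ i j = 1`. -/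
def T2 {N : ℕ} (w : Fin N → Fin N → Bool) (i : Fin N) : Finset (Fin N) :=
  Finset.univ.filter (fun j => w i j = true)

/-- `T₁(i)`: the indices `j` in the class of `i` with `ŵ i j = 0`. -/
def T1 {N K : ℕ} (y : Fin N → Fin K) (w : Fin N → Fin N → Bool) (i : Fin N) :
    Finset (Fin N) :=
  Finset.univ.filter (fun j => y j = y i ∧ w i j = false)

/-- Uniform average of `f` over `S × T`. -/
noncomputable def avg2 {N : ℕ} (S T : Finset (Fin N)) (f : Fin N → Fin N → ℝ) : ℝ :=
  (∑ j ∈ S, ∑ l ∈ T, f j l) / ((S.card : ℝ) * (T.card : ℝ))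

open scoped Classical in
/-- The fraction of pairs of `S × T` satisfying `p`. -/
noncomputable def frac2 {N : ℕ} (S T : Finset (Fin N)) (p : Fin N → Fin N → Prop) : ℝ :=
  (((S ×ˢ T).filter (fun q => p q.1 q.2)).card : ℝ) / ((S.card : ℝ) * (T.card : ℝ))

theorem stmt_8
    (N d K : ℕ) (hN : 1 ≤ N) (hd : 1 ≤ d) (hK : 1 ≤ K)
    (r : ℝ) (hr : 0 < r)
    (z : Fin N → EuclideanSpace ℝ (Fin d)) (hz : ∀ i, ‖z i‖ = r)
    (y : Fin N → Fin K)
    (hD : ∀ k, (classSet y k).Nonempty)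
    (w : Fin N → Fin N → Bool)
    (hsym : ∀ i j, w i j = w j i)
    (hdiag : ∀ i, w i i = true)
    (hcls : ∀ i j, w i j = true → y i = y j)
    (i : Fin N) (hT2 : (T2 w i).Nonempty)
    (δT : ℝ) (hδT : δT ∈ Set.Icc (0 : ℝ) (r ^ 2))
    (σ : ℝ) (hσ : σ = frac2 (T2 w i) (T2 w i) (fun j l => ⟪z j, z l⟫ ≤ δT)) :
    avg2 (T2 w i) (T2 w i) (fun j l => ⟪z j, z l⟫) ≥
      δT - Real.sqrt (5 * σ * (r ^ 2 + δT) * r ^ 2) := by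
  classical
  obtain ⟨hδ0, hδr⟩ := hδT
  set S := T2 w i with hS
  have hcard : 0 < S.card := Finset.card_pos.2 hT2
  have hn : (0:ℝ) < (S.card:ℝ) := by exact_mod_cast hcard
  set P := (S ×ˢ S).filter (fun q => ⟪z q.1, z q.2⟫ ≤ δT) with hPdef
  have hBle : (P.card : ℝ) ≤ (S.card:ℝ) * S.card := by
    have h1 : P.card ≤ S.card * S.card := by
      calc P.card ≤ (S ×ˢ S).card := Finset.card_filter_le _ _
        _ = S.card * S.card := Finset.card_product _ _
    exact_mod_cast h1
  have hB0 : (0:ℝ) ≤ (P.card : ℝ) := Nat.cast_nonneg _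
  have hσ' : σ = (P.card : ℝ) / ((S.card:ℝ) * S.card) := by
    rw [hσ]
    simp only [frac2, hPdef, Finset.filter_congr_decidable, hS]
  have hinner_lb : ∀ j l : Fin N, -(r^2) ≤ ⟪z j, z l⟫ := by
    intro j l
    have h := abs_real_inner_le_norm (z j) (z l)
    rw [hz j, hz l] at h
    have h2 := neg_abs_le (⟪z j, z l⟫ : ℝ)
    nlinarith
  -- lower bound on the total sum
  have hsum : ((S.card:ℝ) * S.card - P.card) * δT + (P.card:ℝ) * (-(r^2))
      ≤ ∑ j ∈ S, ∑ l ∈ S, ⟪z j, z l⟫ := by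
    rw [← Finset.sum_product']
    have hsplit := Finset.sum_filter_add_sum_filter_not (S ×ˢ S)
      (fun q => ⟪z q.1, z q.2⟫ ≤ δT) (fun q => (⟪z q.1, z q.2⟫ : ℝ))
    rw [← hsplit]
    have h1 : (P.card:ℝ) * (-(r^2)) ≤ ∑ q ∈ P, (⟪z q.1, z q.2⟫ : ℝ) := by
      have := Finset.card_nsmul_le_sum P (fun q => (⟪z q.1, z q.2⟫ : ℝ)) (-(r^2))
        (fun q _ => hinner_lb q.1 q.2)
      rwa [nsmul_eq_mul] at this
    have h2 : ((S.card:ℝ) * S.card - P.card) * δT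
        ≤ ∑ q ∈ (S ×ˢ S).filter (fun q => ¬ ⟪z q.1, z q.2⟫ ≤ δT), (⟪z q.1, z q.2⟫ : ℝ) := by
      have hcard2 : (((S ×ˢ S).filter (fun q => ¬ ⟪z q.1, z q.2⟫ ≤ δT)).card : ℝ)
          = (S.card:ℝ) * S.card - P.card := by
        have := Finset.card_filter_add_card_filter_not (s := S ×ˢ S)
          (p := fun q => ⟪z q.1, z q.2⟫ ≤ δT)
        rw [Finset.card_product] at this
        have : (P.card : ℝ) + (((S ×ˢ S).filter (fun q => ¬ ⟪z q.1, z q.2⟫ ≤ δT)).card : ℝ)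
            = (S.card:ℝ) * S.card := by exact_mod_cast this
        linarith
      have := Finset.card_nsmul_le_sum
        ((S ×ˢ S).filter (fun q => ¬ ⟪z q.1, z q.2⟫ ≤ δT))
        (fun q => (⟪z q.1, z q.2⟫ : ℝ)) δT
        (fun q hq => le_of_lt (lt_of_not_ge (Finset.mem_filter.1 hq).2))
      rwa [nsmul_eq_mul, hcard2] at this
    linarith
  have hnn : (0:ℝ) < (S.card:ℝ) * S.card := by positivity
  have hσ0 : 0 ≤ σ := by rw [hσ']; positivity
  have hσ1 : σ ≤ 1 := by rw [hσ']; exact div_le_one_of_le₀ hBle (le_of_lt hnn)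
  -- main bound: avg ≥ δT - σ (r² + δT)
  have hPσ : σ * ((S.card:ℝ) * S.card) = (P.card : ℝ) := by
    rw [hσ']; field_simp
  have hmain : δT - σ * (r^2 + δT) ≤ avg2 S S (fun j l => ⟪z j, z l⟫) := by
    rw [avg2, le_div_iff₀ hnn]
    have key : (δT - σ * (r^2 + δT)) * ((S.card:ℝ) * S.card)
        = ((S.card:ℝ) * S.card - P.card) * δT + (P.card:ℝ) * (-(r^2)) := by
      linear_combination (-(r^2 + δT)) * hPσ
    rw [key]; exact hsum
  -- the sqrt bound: σ (r²+δT) ≤ √(5 σ (r²+δT) r²)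
  have hrδ : (0:ℝ) ≤ r^2 + δT := by positivity
  have ht0 : 0 ≤ σ * (r^2 + δT) := mul_nonneg hσ0 hrδ
  have hsqrt : σ * (r^2 + δT) ≤ Real.sqrt (5 * σ * (r^2 + δT) * r^2) := by
    rw [show σ * (r^2 + δT) = Real.sqrt ((σ * (r^2 + δT))^2) by
      rw [Real.sqrt_sq ht0]]
    apply Real.sqrt_le_sqrt
    have h2 : σ * (r^2 + δT) ≤ 2 * r^2 := by
      nlinarith [mul_le_mul hσ1 (by linarith : r^2 + δT ≤ 2*r^2) hrδ zero_le_one]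
    nlinarith [mul_le_mul_of_nonneg_left h2 ht0, mul_nonneg ht0 (sq_nonneg r)]
  calc δT - Real.sqrt (5 * σ * (r^2 + δT) * r^2) ≤ δT - σ * (r^2 + δT) := by linarith
    _ ≤ avg2 S S (fun j l => ⟪z j, z l⟫) := hmain
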